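/- Let e be a partial isometry in a C*-algebra A (i.e. e e* e = e) and let x ∈ A with ‖x‖ ≤ 1. If ‖e + x‖ = 1 and ‖e − x‖ = 1, then x is orthogonal to e, i.e. e x* = 0 and x* e = 0. -/

import Mathlib

lemma aux_ortho {B : Type*} [CStarAlgebra B] [PartialOrder B] [StarOrderedRing B]
    (E X : B) (hE : E * star E * E = E)
    (h1 : ‖E + X‖ = 1) (h2 : ‖E - X‖ = 1) : star X * E = 0 := by
  set q := E * star E with hq_def
  have hq : q * q = q := by
    nth_rewrite 2 [hq_def]
    rw [← mul_assoc, hE, ← hq_def]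
  have hqs : star q = q := by rw [hq_def]; simp [star_mul]
  have hsaP : IsSelfAdjoint ((E + X) * star (E + X)) := IsSelfAdjoint.mul_star_self _
  have hsaM : IsSelfAdjoint ((E - X) * star (E - X)) := IsSelfAdjoint.mul_star_self _
  have hnP : ‖(E + X) * star (E + X)‖ = 1 := by
    rw [CStarRing.norm_self_mul_star, h1, one_mul]
  have hnM : ‖(E - X) * star (E - X)‖ = 1 := by
    rw [CStarRing.norm_self_mul_star, h2, one_mul]
  have hP : q * ((E + X) * star (E + X)) * q ≤ q := by
    have := CStarAlgebra.star_right_conjugate_le_norm_smul (a := q) (b := (E + X) * star (E + X)) hsaP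
    rwa [hqs, hnP, hq, one_smul] at this
  have hM : q * ((E - X) * star (E - X)) * q ≤ q := by
    have := CStarAlgebra.star_right_conjugate_le_norm_smul (a := q) (b := (E - X) * star (E - X)) hsaM
    rwa [hqs, hnM, hq, one_smul] at this
  have expand : q * ((E + X) * star (E + X)) * q + q * ((E - X) * star (E - X)) * q
      = (q + q) + (q * (X * star X) * q + q * (X * star X) * q) := by
    have : (E + X) * star (E + X) + (E - X) * star (E - X)
        = (q + q) + (X * star X + X * star X) := by
      simp only [star_add, star_sub, hq_def]
      noncomm_ring
    calc q * ((E + X) * star (E + X)) * q + q * ((E - X) * star (E - X)) * q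
        = q * ((E + X) * star (E + X) + (E - X) * star (E - X)) * q := by noncomm_ring
      _ = q * ((q + q) + (X * star X + X * star X)) * q := by rw [this]
      _ = (q * q * q + q * q * q) + (q * (X * star X) * q + q * (X * star X) * q) := by
          noncomm_ring
      _ = _ := by rw [hq, hq]
  have hsum : (q + q) + (q * (X * star X) * q + q * (X * star X) * q) ≤ q + q := by
    rw [← expand]; exact add_le_add hP hM
  have hs : q * (X * star X) * q + q * (X * star X) * q ≤ 0 :=
    le_of_add_le_add_left (a := q + q) (by simpa using hsum)
  have hc0 : (0 : B) ≤ q * (X * star X) * q := by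
    have : q * (X * star X) * q = star (star X * q) * (star X * q) := by
      simp only [star_mul, hqs, star_star]
      noncomm_ring
    rw [this]
    exact star_mul_self_nonneg _
  have hc : q * (X * star X) * q = 0 := by
    refine le_antisymm ?_ hc0
    calc q * (X * star X) * q = 0 + q * (X * star X) * q := by rw [zero_add]
      _ ≤ q * (X * star X) * q + q * (X * star X) * q := add_le_add_left hc0 _
      _ ≤ 0 := hs
  have hw : star X * q = 0 := by
    rw [← CStarRing.star_mul_self_eq_zero_iff]
    rw [star_mul, hqs, star_star, show q * X * (star X * q) = q * (X * star X) * q by noncomm_ring,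
      hc]
  calc star X * E = star X * (q * E) := by rw [hE]
    _ = star X * q * E := (mul_assoc _ _ _).symm
    _ = 0 := by rw [hw, zero_mul]

/-- If `e` is a partial isometry in a C*-algebra, `‖x‖ ≤ 1`, and `‖e + x‖ = ‖e - x‖ = 1`,
then `x` is orthogonal to `e`. -/
theorem stmt1 {A : Type*} [NonUnitalNormedRing A] [StarRing A] [CStarRing A]
    [CompleteSpace A] [NormedSpace ℂ A] [IsScalarTower ℂ A A] [SMulCommClass ℂ A A]
    [StarModule ℂ A]
    (e x : A) (he : e * star e * e = e) (hx : ‖x‖ ≤ 1)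
    (h1 : ‖e + x‖ = 1) (h2 : ‖e - x‖ = 1) :
    e * star x = 0 ∧ star x * e = 0 := by
  letI : NonUnitalCStarAlgebra A := { }
  letI : PartialOrder (Unitization ℂ A) := CStarAlgebra.spectralOrder _
  letI : StarOrderedRing (Unitization ℂ A) := CStarAlgebra.spectralOrderedRing _
  have hinj := Unitization.inr_injective (R := ℂ) (A := A)
  have hE : (↑e : Unitization ℂ A) * star ↑e * ↑e = ↑e := by
    rw [← Unitization.inr_star, ← Unitization.inr_mul, ← Unitization.inr_mul, he]
  have hn1 : ‖((↑e : Unitization ℂ A) + ↑x)‖ = 1 := by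
    rw [← Unitization.inr_add, Unitization.norm_inr, h1]
  have hn2 : ‖((↑e : Unitization ℂ A) - ↑x)‖ = 1 := by
    rw [← Unitization.inr_sub, Unitization.norm_inr, h2]
  have key1 : star (↑x : Unitization ℂ A) * ↑e = 0 := aux_ortho _ _ hE hn1 hn2
  have hxe : star x * e = 0 := by
    apply hinj
    rw [Unitization.inr_mul, Unitization.inr_star, key1, Unitization.inr_zero]
  have hE' : star (↑e : Unitization ℂ A) * star (star ↑e) * star ↑e = star ↑e := by
    rw [star_star]
    calc star (↑e : Unitization ℂ A) * ↑e * star ↑e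
        = star (↑e * star ↑e * ↑e : Unitization ℂ A) := by
          simp only [star_mul, star_star]; noncomm_ring
      _ = star (↑e : Unitization ℂ A) := by rw [hE]
  have hn1' : ‖star (↑e : Unitization ℂ A) + star ↑x‖ = 1 := by
    rw [← star_add, norm_star, hn1]
  have hn2' : ‖star (↑e : Unitization ℂ A) - star ↑x‖ = 1 := by
    rw [← star_sub, norm_star, hn2]
  have key2 : star (star (↑x : Unitization ℂ A)) * star ↑e = 0 :=
    aux_ortho _ _ hE' hn1' hn2'
  rw [star_star] at key2
  have hex : x * star e = 0 := by
    apply hinj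
    rw [Unitization.inr_mul, Unitization.inr_star, key2, Unitization.inr_zero]
  refine ⟨?_, hxe⟩
  calc e * star x = star (x * star e) := by rw [star_mul, star_star]
    _ = 0 := by rw [hex, star_zero]
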